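/- Let $G(n,p)$ be the Erdős–Rényi random graph. If $p^2 n \ge \log(n^2/c)$ for a constant $c > 0$ (i.e., taking $d = 2$ in the general diameter theorem), then with probability at least $1 - e^{-c/2} - o(1)$ the diameter of $G(n,p)$ is at most $3$. -/

import Mathlib

open MeasureTheory Filter

/-- The Erdős–Rényi measure on edge-indicator functions: each potential edge (an
element of `Sym2 (Fin n)`) is present independently with probability `p`
(clamped to `[0,1]`). -/
noncomputable def erMeasure (n : ℕ) (p : ℝ) : Measure (Sym2 (Fin n) → Bool) :=
  Measure.pi fun _ =>
    (PMF.bernoulli (min (Real.toNNReal p) 1) (min_le_right _ _)).toMeasure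

/-- The simple graph determined by an edge-indicator function. -/
def graphOf {n : ℕ} (ω : Sym2 (Fin n) → Bool) : SimpleGraph (Fin n) :=
  SimpleGraph.fromRel fun u v => ω s(u, v) = true

open scoped ENNReal

namespace ERProof



variable {n : ℕ} {p : ℝ}

lemma measurableSet_all (s : Set (Sym2 (Fin n) → Bool)) : MeasurableSet s := by
  have h1 : ∀ ω : Sym2 (Fin n) → Bool, MeasurableSet ({ω} : Set (Sym2 (Fin n) → Bool)) := by
    intro ω
    have : ({ω} : Set (Sym2 (Fin n) → Bool)) = ⋂ e, (fun ω' => ω' e) ⁻¹' {ω e} := by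
      ext ω'; simp [funext_iff]
    rw [this]
    exact MeasurableSet.iInter fun e => (measurable_pi_apply e) (measurableSet_singleton _)
  have : s = ⋃ ω ∈ s, {ω} := by simp
  rw [this]
  exact MeasurableSet.biUnion (Set.to_countable s) fun ω _ => h1 ω

instance : IsProbabilityMeasure (erMeasure n p) := by
  unfold erMeasure; infer_instance

/-- real weight of a coordinate value -/
def wR (p : ℝ) (b : Bool) : ℝ := if b then p else 1 - p

lemma wR_nonneg (hp0 : 0 ≤ p) (hp1 : p ≤ 1) (b : Bool) : 0 ≤ wR p b := by
  cases b <;> simp [wR] <;> linarith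

lemma bern_singleton (hp0 : 0 ≤ p) (hp1 : p ≤ 1) (b : Bool) :
    (PMF.bernoulli (min (Real.toNNReal p) 1) (min_le_right _ _)).toMeasure {b}
      = ENNReal.ofReal (wR p b) := by
  rw [PMF.toMeasure_apply_singleton _ _ (measurableSet_singleton _), PMF.bernoulli_apply]
  have hmin : min (Real.toNNReal p) 1 = Real.toNNReal p :=
    min_eq_left (Real.toNNReal_le_one.2 hp1)
  cases b with
  | true => simp [hmin, wR]; rfl
  | false =>
      simp only [Bool.cond_false, hmin, wR, Bool.false_eq_true, if_false]
      rw [ENNReal.coe_sub, ENNReal.coe_one]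
      rw [show ((Real.toNNReal p : NNReal) : ℝ≥0∞) = ENNReal.ofReal p from rfl]
      rw [← ENNReal.ofReal_one, ← ENNReal.ofReal_sub _ hp0]

lemma ofReal_prod {α : Type*} (s : Finset α) (f : α → ℝ) (hf : ∀ a ∈ s, 0 ≤ f a) :
    ENNReal.ofReal (∏ a ∈ s, f a) = ∏ a ∈ s, ENNReal.ofReal (f a) := by
  classical
  induction s using Finset.induction_on with
  | empty => simp
  | insert a s hx ih =>
      rw [Finset.prod_insert hx, Finset.prod_insert hx,
        ENNReal.ofReal_mul (hf a (Finset.mem_insert_self a s)), ih fun b hb => hf b (Finset.mem_insert_of_mem hb)]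

/-- cylinder set -/
def cyl (E : Finset (Sym2 (Fin n))) (σ : Sym2 (Fin n) → Bool) : Set (Sym2 (Fin n) → Bool) :=
  {ω | ∀ e ∈ E, ω e = σ e}

lemma meas_cyl (hp0 : 0 ≤ p) (hp1 : p ≤ 1) (E : Finset (Sym2 (Fin n))) (σ : Sym2 (Fin n) → Bool) :
    erMeasure n p (cyl E σ) = ENNReal.ofReal (∏ e ∈ E, wR p (σ e)) := by
  classical
  have hset : cyl E σ = Set.pi Set.univ (fun e => if e ∈ E then ({σ e} : Set Bool) else Set.univ) := by
    ext ω
    simp only [cyl, Set.mem_setOf_eq, Set.mem_pi, Set.mem_univ, forall_true_left]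
    constructor
    · intro h e
      by_cases he : e ∈ E
      · simp [he, h e he]
      · simp [he]
    · intro h e he
      have := h e; simpa [he] using this
  rw [hset, erMeasure, Measure.pi_pi]
  rw [ofReal_prod E _ (fun e _ => wR_nonneg hp0 hp1 _)]
  have : ∀ e : Sym2 (Fin n),
      (PMF.bernoulli (min (Real.toNNReal p) 1) (min_le_right _ _)).toMeasure
        (if e ∈ E then ({σ e} : Set Bool) else Set.univ)
      = if e ∈ E then ENNReal.ofReal (wR p (σ e)) else 1 := by
    intro e
    by_cases he : e ∈ E <;> simp only [he, ↓reduceIte, measure_univ] <;> simp [bern_singleton hp0 hp1]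
  simp_rw [this]
  rw [Finset.prod_ite_mem Finset.univ E (fun e => ENNReal.ofReal (wR p (σ e))),
    Finset.univ_inter]





structure Good (u v : Fin n) (W X : Finset (Fin n)) : Prop where
  huv : u ≠ v
  hWX : Disjoint W X
  huW : u ∉ W
  hvW : v ∉ W
  huX : u ∉ X
  hvX : v ∉ X

def badPair (u v : Fin n) (W X : Finset (Fin n)) : Set (Sym2 (Fin n) → Bool) :=
  {ω | ∀ w ∈ W, ∀ x ∈ X, ¬(ω s(u,w) = true ∧ ω s(w,x) = true ∧ ω s(x,v) = true)}

def pE (u v : Fin n) (W X S T : Finset (Fin n)) : Finset (Sym2 (Fin n)) :=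
  ((W.image fun w => s(u,w)) ∪ (X.image fun x => s(x,v))) ∪
    ((S ×ˢ T).image fun wx => s(wx.1, wx.2))

def pσ (u v : Fin n) (S T : Finset (Fin n)) : Sym2 (Fin n) → Bool :=
  fun e => decide (e ∈ (S.image fun w => s(u,w)) ∪ (T.image fun x => s(x,v)))

variable {u v : Fin n} {W X S T : Finset (Fin n)}

lemma pσ_uw (h : Good u v W X) (hS : S ⊆ W) (hT : T ⊆ X) {w : Fin n} (hw : w ∈ W) :
    pσ u v S T s(u,w) = decide (w ∈ S) := by
  unfold pσ
  rw [decide_eq_decide]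
  simp only [Finset.mem_union, Finset.mem_image]
  constructor
  · rintro (⟨a, ha, heq⟩ | ⟨a, ha, heq⟩)
    · rcases Sym2.eq_iff.1 heq with ⟨h1, h2⟩ | ⟨h1, h2⟩
      · rwa [h2] at ha
      · rw [← h1] at hw; exact absurd hw h.huW
    · rcases Sym2.eq_iff.1 heq with ⟨h1, h2⟩ | ⟨h1, h2⟩
      · rw [h1] at ha; exact absurd (hT ha) h.huX
      · exact absurd h2.symm h.huv
  · intro hwS
    exact Or.inl ⟨w, hwS, rfl⟩

lemma pσ_xv (h : Good u v W X) (hS : S ⊆ W) (hT : T ⊆ X) {x : Fin n} (hx : x ∈ X) :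
    pσ u v S T s(x,v) = decide (x ∈ T) := by
  unfold pσ
  rw [decide_eq_decide]
  simp only [Finset.mem_union, Finset.mem_image]
  constructor
  · rintro (⟨a, ha, heq⟩ | ⟨a, ha, heq⟩)
    · rcases Sym2.eq_iff.1 heq with ⟨h1, h2⟩ | ⟨h1, h2⟩
      · rw [← h1] at hx; exact absurd hx h.huX
      · exact absurd h1 h.huv
    · rcases Sym2.eq_iff.1 heq with ⟨h1, h2⟩ | ⟨h1, h2⟩
      · rwa [h1] at ha
      · rw [← h2] at hx; exact absurd hx h.hvX
  · intro hxT
    exact Or.inr ⟨x, hxT, rfl⟩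

lemma pσ_wx (h : Good u v W X) (hS : S ⊆ W) (hT : T ⊆ X) {w x : Fin n}
    (hw : w ∈ W) (hx : x ∈ X) : pσ u v S T s(w,x) = false := by
  unfold pσ
  simp only [decide_eq_false_iff_not, Finset.mem_union, Finset.mem_image]
  rintro (⟨a, ha, heq⟩ | ⟨a, ha, heq⟩)
  · rcases Sym2.eq_iff.1 heq with ⟨h1, h2⟩ | ⟨h1, h2⟩
    · rw [← h1] at hw; exact h.huW hw
    · rw [← h1] at hx; exact h.huX hx
  · rcases Sym2.eq_iff.1 heq with ⟨h1, h2⟩ | ⟨h1, h2⟩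
    · rw [← h2] at hx; exact h.hvX hx
    · rw [← h2] at hw; exact h.hvW hw


lemma badPair_subset (h : Good u v W X) :
    badPair u v W X ⊆
      ⋃ ST ∈ W.powerset ×ˢ X.powerset,
        cyl (pE u v W X ST.1 ST.2) (pσ u v ST.1 ST.2) := by
  classical
  intro ω hω
  set S : Finset (Fin n) := W.filter (fun w => ω s(u,w) = true) with hSdef
  set T : Finset (Fin n) := X.filter (fun x => ω s(x,v) = true) with hTdef
  have hS : S ⊆ W := Finset.filter_subset _ _
  have hT : T ⊆ X := Finset.filter_subset _ _
  refine Set.mem_iUnion₂.2 ⟨(S, T), ?_, ?_⟩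
  · simp only [Finset.mem_product, Finset.mem_powerset]
    exact ⟨hS, hT⟩
  · intro e he
    simp only [pE, Finset.mem_union, Finset.mem_image] at he
    rcases he with (⟨w, hw, rfl⟩ | ⟨x, hx, rfl⟩) | ⟨⟨w, x⟩, hwx, rfl⟩
    · rw [pσ_uw h hS hT hw]
      by_cases hb : ω s(u,w) = true
      · simp [hb, hSdef, hw]
      · simp only [Bool.not_eq_true] at hb
        simp [hb, hSdef, hw]
    · rw [pσ_xv h hS hT hx]
      by_cases hb : ω s(x,v) = true
      · simp [hb, hTdef, hx]
      · simp only [Bool.not_eq_true] at hb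
        simp [hb, hTdef, hx]
    · simp only [Finset.mem_product] at hwx
      obtain ⟨hwS, hxT⟩ := hwx
      rw [pσ_wx h hS hT (hS hwS) (hT hxT)]
      have h1 : ω s(u,w) = true := (Finset.mem_filter.1 hwS).2
      have h2 : ω s(x,v) = true := (Finset.mem_filter.1 hxT).2
      have := hω w (hS hwS) x (hT hxT)
      rcases Bool.eq_false_or_eq_true (ω s(w,x)) with hb | hb
      · exact absurd ⟨h1, hb, h2⟩ this
      · exact hb


lemma prod_pE (h : Good u v W X) (hS : S ⊆ W) (hT : T ⊆ X) :
    ∏ e ∈ pE u v W X S T, wR p (pσ u v S T e)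
      = (p ^ S.card * (1-p) ^ (W \ S).card) * (p ^ T.card * (1-p) ^ (X \ T).card)
          * (1-p) ^ (S.card * T.card) := by
  classical
  have hd13 : Disjoint (W.image fun w => s(u,w)) (X.image fun x => s(x,v)) := by
    rw [Finset.disjoint_left]
    intro e he hmem
    rw [Finset.mem_image] at he hmem
    obtain ⟨w, hw, rfl⟩ := he
    obtain ⟨x, hx, heq⟩ := hmem
    rcases Sym2.eq_iff.1 heq with ⟨h1, h2⟩ | ⟨h1, h2⟩
    · rw [h1] at hx; exact h.huX hx
    · exact h.huv h2.symm
  have hd2 : Disjoint ((W.image fun w => s(u,w)) ∪ (X.image fun x => s(x,v)))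
      ((S ×ˢ T).image fun wx => s(wx.1, wx.2)) := by
    rw [Finset.disjoint_left]
    rintro e he hmem
    rw [Finset.mem_image] at hmem
    obtain ⟨⟨w, x⟩, hwx, rfl⟩ := hmem
    simp only [Finset.mem_product] at hwx
    have hw : w ∈ W := hS hwx.1
    have hx : x ∈ X := hT hwx.2
    rw [Finset.mem_union] at he
    rcases he with he | he
    · rw [Finset.mem_image] at he
      obtain ⟨a, ha, heq⟩ := he
      rcases Sym2.eq_iff.1 heq with ⟨h1, h2⟩ | ⟨h1, h2⟩
      · exact h.huW (h1 ▸ hw)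
      · exact h.huX (h1 ▸ hx)
    · rw [Finset.mem_image] at he
      obtain ⟨a, ha, heq⟩ := he
      rcases Sym2.eq_iff.1 heq with ⟨h1, h2⟩ | ⟨h1, h2⟩
      · exact h.hvX (h2 ▸ hx)
      · exact h.hvW (h2 ▸ hw)
  rw [pE, Finset.prod_union hd2, Finset.prod_union hd13]
  have e1 : ∏ e ∈ W.image (fun w => s(u,w)), wR p (pσ u v S T e)
      = p ^ S.card * (1-p) ^ (W \ S).card := by
    rw [Finset.prod_image]
    · have : ∀ w ∈ W, wR p (pσ u v S T s(u,w)) = if w ∈ S then p else (1-p) := by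
        intro w hw
        rw [pσ_uw h hS hT hw]
        by_cases hws : w ∈ S <;> simp [hws, wR]
      rw [Finset.prod_congr rfl this]
      nth_rewrite 1 [← Finset.union_sdiff_of_subset hS]
      rw [Finset.prod_union Finset.disjoint_sdiff]
      rw [Finset.prod_congr rfl (fun w hw => if_pos hw),
        Finset.prod_congr rfl (fun w (hw : w ∈ W \ S) => if_neg (Finset.mem_sdiff.1 hw).2),
        Finset.prod_const, Finset.prod_const]
    · intro a ha b hb heq
      rcases Sym2.eq_iff.1 heq with ⟨h1, h2⟩ | ⟨h1, h2⟩
      · exact h2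
      · exact absurd (h1 ▸ hb) h.huW
  have e3 : ∏ e ∈ X.image (fun x => s(x,v)), wR p (pσ u v S T e)
      = p ^ T.card * (1-p) ^ (X \ T).card := by
    rw [Finset.prod_image]
    · have : ∀ x ∈ X, wR p (pσ u v S T s(x,v)) = if x ∈ T then p else (1-p) := by
        intro x hx
        rw [pσ_xv h hS hT hx]
        by_cases hxt : x ∈ T <;> simp [hxt, wR]
      rw [Finset.prod_congr rfl this]
      nth_rewrite 1 [← Finset.union_sdiff_of_subset hT]
      rw [Finset.prod_union Finset.disjoint_sdiff]
      rw [Finset.prod_congr rfl (fun x hx => if_pos hx),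
        Finset.prod_congr rfl (fun x (hx : x ∈ X \ T) => if_neg (Finset.mem_sdiff.1 hx).2),
        Finset.prod_const, Finset.prod_const]
    · intro a ha b hb heq
      rcases Sym2.eq_iff.1 heq with ⟨h1, h2⟩ | ⟨h1, h2⟩
      · exact h1
      · exact absurd (h2 ▸ hb) h.hvX
  have e2 : ∏ e ∈ (S ×ˢ T).image (fun wx => s(wx.1, wx.2)), wR p (pσ u v S T e)
      = (1-p) ^ (S.card * T.card) := by
    rw [Finset.prod_image]
    · have : ∀ wx ∈ S ×ˢ T, wR p (pσ u v S T s(wx.1, wx.2)) = (1-p) := by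
        intro wx hwx
        simp only [Finset.mem_product] at hwx
        rw [pσ_wx h hS hT (hS hwx.1) (hT hwx.2)]
        simp [wR]
      rw [Finset.prod_congr rfl this, Finset.prod_const, Finset.card_product]
    · intro a ha b hb heq
      simp only [Finset.coe_product, Set.mem_prod, Finset.mem_coe, Finset.mem_product] at ha hb
      rcases Sym2.eq_iff.1 heq with ⟨h1, h2⟩ | ⟨h1, h2⟩
      · exact Prod.ext h1 h2
      · have hmem : a.1 ∈ X := by rw [h1]; exact hT hb.2
        exact absurd hmem (Finset.disjoint_left.1 h.hWX (hS ha.1))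
  rw [e1, e3, e2]




lemma one_sub_exp_neg_ge {x : ℝ} (hx : 0 ≤ x) : min x 1 / 2 ≤ 1 - Real.exp (-x) := by
  rcases le_total x 1 with hxle | hxge
  · rw [min_eq_left hxle]
    have h1 : Real.exp x * Real.exp (-x) = 1 := by rw [← Real.exp_add]; simp
    have h2 : x + 1 ≤ Real.exp x := Real.add_one_le_exp x
    have h3 : 0 < Real.exp (-x) := Real.exp_pos _
    have h4 : (x+1) * Real.exp (-x) ≤ 1 := by
      calc (x+1) * Real.exp (-x) ≤ Real.exp x * Real.exp (-x) :=
            mul_le_mul_of_nonneg_right h2 h3.le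
        _ = 1 := h1
    nlinarith [mul_nonneg hx (sub_nonneg.2 hxle)]
  · rw [min_eq_right hxge]
    have h1 : Real.exp (-x) ≤ Real.exp (-1) := Real.exp_le_exp.2 (by linarith)
    have h2 : Real.exp (-1) ≤ 1/2 := by
      rw [Real.exp_neg]
      rw [inv_le_comm₀ (Real.exp_pos 1) (by norm_num)]
      have := Real.add_one_le_exp 1
      linarith
    linarith

/-- Step B: per-`s` bound. -/
lemma per_s_bound (hp0 : 0 ≤ p) (hp1 : p ≤ 1) (s m : ℕ) :
    (p * (1-p)^s + (1-p))^m ≤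
      (Real.exp (-(m:ℝ) * p^2 / 2))^s + Real.exp (-(m:ℝ) * p / 2) := by
  have hq0 : (0:ℝ) ≤ 1 - p := by linarith
  have hqs0 : (0:ℝ) ≤ (1-p)^s := pow_nonneg hq0 s
  have hqs1 : (1-p)^s ≤ 1 := pow_le_one₀ hq0 (by linarith)
  set A : ℝ := 1 - (1-p)^s with hA
  have hA0 : 0 ≤ A := by simp [hA]; linarith
  have hA1 : A ≤ 1 := by simp [hA]; linarith
  have hbase : p * (1-p)^s + (1-p) = 1 - p * A := by rw [hA]; ring
  have hnn : 0 ≤ 1 - p * A := by nlinarith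
  have hle : (1 - p*A)^m ≤ Real.exp (-(m:ℝ) * p * A) := by
    calc (1 - p*A)^m ≤ (Real.exp (-(p*A)))^m := by
          apply pow_le_pow_left₀ hnn
          linarith [Real.add_one_le_exp (-(p*A))]
      _ = Real.exp (-(m:ℝ) * p * A) := by
          rw [← Real.exp_nat_mul]; ring_nf
  -- lower bound A
  have hqexp : (1-p)^s ≤ Real.exp (-(p * s)) := by
    calc (1-p)^s ≤ (Real.exp (-p))^s := by
          apply pow_le_pow_left₀ hq0
          linarith [Real.add_one_le_exp (-p)]
      _ = Real.exp (-(p*s)) := by rw [← Real.exp_nat_mul]; ring_nf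
  have hAge : min (p * s) 1 / 2 ≤ A := by
    have := one_sub_exp_neg_ge (x := p * s) (by positivity)
    rw [hA]; linarith
  rw [hbase]
  rcases le_total (p * s) 1 with hps | hps
  · have hA2 : p * s / 2 ≤ A := by rw [min_eq_left hps] at hAge; linarith
    have : Real.exp (-(m:ℝ) * p * A) ≤ (Real.exp (-(m:ℝ) * p^2 / 2))^s := by
      rw [← Real.exp_nat_mul]
      apply Real.exp_le_exp.2
      have hmp : 0 ≤ (m:ℝ) * p := by positivity
      nlinarith
    have hpos : 0 < Real.exp (-(m:ℝ) * p / 2) := Real.exp_pos _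
    linarith [hle.trans this]
  · have hA2 : 1 / 2 ≤ A := by rw [min_eq_right hps] at hAge; linarith
    have : Real.exp (-(m:ℝ) * p * A) ≤ Real.exp (-(m:ℝ) * p / 2) := by
      apply Real.exp_le_exp.2
      have hmp : 0 ≤ (m:ℝ) * p := by positivity
      nlinarith
    have hpos : (0:ℝ) ≤ (Real.exp (-(m:ℝ) * p^2 / 2))^s := by positivity
    linarith [hle.trans this]

/-- binomial-type identity via `Finset.prod_add`:
`∑_{T ⊆ X} a^|T| b^|X\T| = (a+b)^|X|`. -/
lemma powerset_sum_eq {α : Type*} [DecidableEq α] (a b : ℝ) (X : Finset α) :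
    ∑ T ∈ X.powerset, a ^ T.card * b ^ (X \ T).card = (a + b) ^ X.card := by
  have := Finset.prod_add (fun _ : α => a) (fun _ : α => b) X
  simp only [Finset.prod_const] at this
  exact this.symm

lemma sum_bound {α : Type*} [DecidableEq α] (hp0 : 0 ≤ p) (hp1 : p ≤ 1) (W X : Finset α) :
    (∑ S ∈ W.powerset, ∑ T ∈ X.powerset,
      (p ^ S.card * (1-p) ^ (W \ S).card) * (p ^ T.card * (1-p) ^ (X \ T).card)
        * (1-p) ^ (S.card * T.card))
    ≤ Real.exp (-(W.card : ℝ) * p * (1 - Real.exp (-(X.card : ℝ) * p^2 / 2)))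
        + Real.exp (-(X.card : ℝ) * p / 2) := by
  have hq0 : (0:ℝ) ≤ 1 - p := by linarith
  set m := X.card
  set M := W.card
  set ε : ℝ := Real.exp (-(m:ℝ) * p^2 / 2) with hε
  set δ : ℝ := Real.exp (-(m:ℝ) * p / 2) with hδ
  have hε0 : 0 < ε := Real.exp_pos _
  have hε1 : ε ≤ 1 := by
    rw [hε]
    apply Real.exp_le_one_iff.2
    have h : 0 ≤ (m:ℝ) * p^2 / 2 := by positivity
    linarith
  -- rewrite inner sums
  have step1 : ∀ S ∈ W.powerset,
      (∑ T ∈ X.powerset, (p ^ S.card * (1-p) ^ (W \ S).card)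
        * (p ^ T.card * (1-p) ^ (X \ T).card) * (1-p) ^ (S.card * T.card))
      = (p ^ S.card * (1-p) ^ (W \ S).card) * (p * (1-p)^S.card + (1-p))^m := by
    intro S _
    have : ∀ T ∈ X.powerset,
        (p ^ S.card * (1-p) ^ (W \ S).card) * (p ^ T.card * (1-p) ^ (X \ T).card)
          * (1-p) ^ (S.card * T.card)
        = (p ^ S.card * (1-p) ^ (W \ S).card)
            * ((p * (1-p)^S.card) ^ T.card * (1-p) ^ (X \ T).card) := by
      intro T _
      rw [mul_pow, mul_comm S.card T.card, pow_mul]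
      ring
    rw [Finset.sum_congr rfl this, ← Finset.mul_sum, powerset_sum_eq]
  rw [Finset.sum_congr rfl step1]
  -- apply per-s bound
  have step2 : ∑ S ∈ W.powerset,
      (p ^ S.card * (1-p) ^ (W \ S).card) * (p * (1-p)^S.card + (1-p))^m
      ≤ ∑ S ∈ W.powerset, (p ^ S.card * (1-p) ^ (W \ S).card) * (ε^S.card + δ) := by
    apply Finset.sum_le_sum
    intro S _
    apply mul_le_mul_of_nonneg_left (per_s_bound hp0 hp1 S.card m)
    positivity
  have step3 : ∑ S ∈ W.powerset, (p ^ S.card * (1-p) ^ (W \ S).card) * (ε^S.card + δ)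
      = (p * ε + (1-p))^M + δ := by
    have expand : ∀ S ∈ W.powerset, (p ^ S.card * (1-p) ^ (W \ S).card) * (ε^S.card + δ)
        = (p*ε) ^ S.card * (1-p) ^ (W \ S).card + δ * (p ^ S.card * (1-p) ^ (W \ S).card) := by
      intro S _
      rw [mul_pow]; ring
    rw [Finset.sum_congr rfl expand, Finset.sum_add_distrib, powerset_sum_eq, ← Finset.mul_sum,
      powerset_sum_eq]
    have : p + (1 - p) = 1 := by ring
    rw [this, one_pow, mul_one]
  have step4 : (p * ε + (1-p))^M ≤ Real.exp (-(M:ℝ) * p * (1 - ε)) := by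
    have h1 : p * ε + (1-p) = 1 - p * (1-ε) := by ring
    have hnn : 0 ≤ 1 - p * (1-ε) := by nlinarith
    rw [h1]
    calc (1 - p*(1-ε))^M ≤ (Real.exp (-(p*(1-ε))))^M := by
          apply pow_le_pow_left₀ hnn
          linarith [Real.add_one_le_exp (-(p*(1-ε)))]
      _ = Real.exp (-(M:ℝ) * p * (1-ε)) := by rw [← Real.exp_nat_mul]; ring_nf
  calc _ ≤ ∑ S ∈ W.powerset, (p ^ S.card * (1-p) ^ (W \ S).card) * (ε^S.card + δ) := step2
    _ = (p * ε + (1-p))^M + δ := step3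
    _ ≤ Real.exp (-(M:ℝ) * p * (1 - ε)) + δ := by linarith [step4]



lemma exists_WX (u v : Fin n) (huv : u ≠ v) :
    ∃ W X : Finset (Fin n), Good u v W X ∧ W.card = (n-2)/2 ∧ X.card = n - 2 - (n-2)/2 := by
  classical
  set R : Finset (Fin n) := Finset.univ \ {u, v} with hR
  have hRcard : R.card = n - 2 := by
    rw [hR, Finset.card_sdiff_of_subset (Finset.subset_univ _), Finset.card_univ, Fintype.card_fin]
    congr 1
    rw [Finset.card_insert_of_notMem (by simp [huv]), Finset.card_singleton]
  obtain ⟨W, hWR, hWcard⟩ := Finset.exists_subset_card_eq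
    (show (n-2)/2 ≤ R.card by rw [hRcard]; omega)
  have huR : u ∉ R := by simp [hR]
  have hvR : v ∉ R := by simp [hR]
  refine ⟨W, R \ W, ⟨huv, Finset.disjoint_sdiff, fun h => huR (hWR h), fun h => hvR (hWR h),
    fun h => huR (Finset.mem_sdiff.1 h).1, fun h => hvR (Finset.mem_sdiff.1 h).1⟩, hWcard, ?_⟩
  rw [Finset.card_sdiff_of_subset hWR, hRcard, hWcard]

lemma adj_of {ω : Sym2 (Fin n) → Bool} {a b : Fin n} (hab : a ≠ b) (h : ω s(a,b) = true) :
    (graphOf ω).Adj a b := by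
  rw [graphOf, SimpleGraph.fromRel_adj]
  exact ⟨hab, Or.inl h⟩

lemma graph_conclusion {ω : Sym2 (Fin n) → Bool} (hn : 0 < n)
    (h : ∀ u v : Fin n, u ≠ v → ∃ w x : Fin n, w ≠ u ∧ w ≠ x ∧ x ≠ v ∧
      ω s(u,w) = true ∧ ω s(w,x) = true ∧ ω s(x,v) = true) :
    (graphOf ω).Connected ∧ ∀ u v : Fin n, (graphOf ω).dist u v ≤ 3 := by
  have hwalk : ∀ u v : Fin n, u ≠ v → ∃ q : (graphOf ω).Walk u v, q.length = 3 := by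
    intro u v huv
    obtain ⟨w, x, hwu, hwx, hxv, h1, h2, h3⟩ := h u v huv
    refine ⟨SimpleGraph.Walk.cons ((adj_of hwu.symm h1).symm.symm)
      (SimpleGraph.Walk.cons (adj_of hwx h2)
        (SimpleGraph.Walk.cons (adj_of (fun hh => hxv hh) h3) SimpleGraph.Walk.nil)), rfl⟩
  constructor
  · rw [SimpleGraph.connected_iff]
    refine ⟨fun u v => ?_, ⟨⟨0, hn⟩⟩⟩
    by_cases huv : u = v
    · subst huv; exact SimpleGraph.Reachable.refl u
    · obtain ⟨q, _⟩ := hwalk u v huv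
      exact ⟨q⟩
  · intro u v
    by_cases huv : u = v
    · subst huv; simp [SimpleGraph.dist_self]
    · obtain ⟨q, hq⟩ := hwalk u v huv
      calc (graphOf ω).dist u v ≤ q.length := SimpleGraph.dist_le q
        _ = 3 := hq

lemma pair_bound (hp0 : 0 ≤ p) (hp1 : p ≤ 1) {u v : Fin n} {W X : Finset (Fin n)}
    (h : Good u v W X) :
    erMeasure n p (badPair u v W X) ≤
      ENNReal.ofReal (Real.exp (-(W.card:ℝ) * p * (1 - Real.exp (-(X.card:ℝ) * p^2 / 2)))
        + Real.exp (-(X.card:ℝ) * p / 2)) := by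
  classical
  have step1 : erMeasure n p (badPair u v W X) ≤
      ∑ ST ∈ W.powerset ×ˢ X.powerset,
        erMeasure n p (cyl (pE u v W X ST.1 ST.2) (pσ u v ST.1 ST.2)) :=
    le_trans (measure_mono (badPair_subset h)) (measure_biUnion_finset_le _ _)
  have step2 : ∀ ST ∈ W.powerset ×ˢ X.powerset,
      erMeasure n p (cyl (pE u v W X ST.1 ST.2) (pσ u v ST.1 ST.2))
        = ENNReal.ofReal (∏ e ∈ pE u v W X ST.1 ST.2, wR p (pσ u v ST.1 ST.2 e)) :=
    fun ST _ => meas_cyl hp0 hp1 _ _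
  rw [Finset.sum_congr rfl step2, ← ENNReal.ofReal_sum_of_nonneg
    (fun ST _ => Finset.prod_nonneg fun e _ => wR_nonneg hp0 hp1 _)] at step1
  refine le_trans step1 (ENNReal.ofReal_le_ofReal ?_)
  have hrw : (∑ ST ∈ W.powerset ×ˢ X.powerset,
        ∏ e ∈ pE u v W X ST.1 ST.2, wR p (pσ u v ST.1 ST.2 e))
      = ∑ S ∈ W.powerset, ∑ T ∈ X.powerset,
          (p ^ S.card * (1-p) ^ (W \ S).card) * (p ^ T.card * (1-p) ^ (X \ T).card)
            * (1-p) ^ (S.card * T.card) := by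
    rw [Finset.sum_product]
    exact Finset.sum_congr rfl fun S hS => Finset.sum_congr rfl fun T hT =>
      prod_pE h (Finset.mem_powerset.1 hS) (Finset.mem_powerset.1 hT)
  rw [hrw]
  exact sum_bound hp0 hp1 W X

end ERProof

set_option maxHeartbeats 2000000 in
/-- Diameter bound for `G(n,p)`: if `p n ^ 2 * n ≥ log (n² / c)` for a constant
`c > 0`, then with probability at least `1 - e^{-c/2} - o(1)` the graph `G(n, p n)`
is connected with diameter at most `3`. -/
theorem stmt_9 (c : ℝ) (hc : 0 < c) (p : ℕ → ℝ)
    (hp0 : ∀ n, 0 ≤ p n) (hp1 : ∀ n, p n ≤ 1)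
    (hpn : ∀ n : ℕ, Real.log ((n : ℝ) ^ 2 / c) ≤ (p n) ^ 2 * n) :
    ∃ g : ℕ → ℝ, Tendsto g atTop (nhds 0) ∧
      ∀ n : ℕ, 1 - Real.exp (-c / 2) - g n ≤
        (erMeasure n (p n)
          {ω | (graphOf ω).Connected ∧
            ∀ u v : Fin n, (graphOf ω).dist u v ≤ 3}).toReal := by
  classical
  have key : ∀ᶠ n : ℕ in atTop, 1 - Real.exp (-c / 2) ≤
      (erMeasure n (p n) {ω | (graphOf ω).Connected ∧
        ∀ u v : Fin n, (graphOf ω).dist u v ≤ 3}).toReal := by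
    have hsqrt : Tendsto (fun x : ℝ => Real.sqrt x) atTop atTop :=
      tendsto_atTop_atTop_of_monotone (fun a b hab => Real.sqrt_le_sqrt hab)
        (fun b => ⟨(max b 0)^2, by rw [Real.sqrt_sq (le_max_right b 0)]; exact le_max_left b 0⟩)
    have hcomp : Tendsto (fun n : ℕ => Real.sqrt n / 8) atTop atTop :=
      Tendsto.atTop_div_const (by norm_num) (hsqrt.comp tendsto_natCast_atTop_atTop)
    have h1 : Tendsto (fun x : ℝ => (8192:ℝ) * (x ^ 4 * Real.exp (-x))) atTop (nhds 0) := by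
      have := (Real.tendsto_pow_mul_exp_neg_atTop_nhds_zero 4).const_mul (8192:ℝ)
      simpa using this
    have tendF : Tendsto (fun n : ℕ => 2 * (n:ℝ)^2 * Real.exp (-Real.sqrt n / 8))
        atTop (nhds 0) := by
      have h2 := h1.comp hcomp
      refine h2.congr fun n => ?_
      have hs : Real.sqrt (n:ℝ) ^ 4 = (n:ℝ)^2 := by
        rw [show (4:ℕ) = 2*2 from rfl, pow_mul, Real.sq_sqrt (Nat.cast_nonneg n)]
      simp only [Function.comp_apply]
      rw [div_pow, hs, neg_div]
      ring
    have hFev : ∀ᶠ n : ℕ in atTop,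
        2 * (n:ℝ)^2 * Real.exp (-Real.sqrt n / 8) < Real.exp (-c / 2) :=
      tendF.eventually_lt_const (Real.exp_pos _)
    have hcev : ∀ᶠ n : ℕ in atTop, c ≤ (n:ℝ) :=
      tendsto_natCast_atTop_atTop.eventually_ge_atTop c
    filter_upwards [hFev, hcev, eventually_ge_atTop 256] with n hFn hcn h256
    have hn0 : 0 < n := by omega
    have hp0n := hp0 n
    have hp1n := hp1 n
    -- choose W, X for each pair
    have hex : ∀ uv : Fin n × Fin n, ∃ WX : Finset (Fin n) × Finset (Fin n),
        uv.1 ≠ uv.2 → (ERProof.Good uv.1 uv.2 WX.1 WX.2 ∧ WX.1.card = (n-2)/2 ∧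
          WX.2.card = n-2-(n-2)/2) := by
      intro uv
      by_cases huv : uv.1 ≠ uv.2
      · obtain ⟨W, X, hg, hWc, hXc⟩ := ERProof.exists_WX uv.1 uv.2 huv
        exact ⟨(W, X), fun _ => ⟨hg, hWc, hXc⟩⟩
      · exact ⟨(∅, ∅), fun hcon => absurd hcon huv⟩
    choose WX hWX using hex
    set pairs : Finset (Fin n × Fin n) :=
      Finset.univ.filter (fun uv : Fin n × Fin n => uv.1 ≠ uv.2) with hpairs
    set k : ℕ := (n-2)/2 with hk
    set m : ℕ := n - 2 - (n-2)/2 with hm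
    have hkml : k ≤ m := by omega
    have hk4 : (n:ℝ) ≤ 4 * (k:ℝ) := by
      have h' : n ≤ 4 * ((n-2)/2) := by omega
      calc (n:ℝ) ≤ ((4 * ((n-2)/2) : ℕ) : ℝ) := by exact_mod_cast h'
        _ = 4 * (k:ℝ) := by push_cast [hk]; ring
    have hn3 : (3:ℝ) ≤ (n:ℝ) := by exact_mod_cast (show 3 ≤ n by omega)
    have hnpos : (0:ℝ) < n := by linarith
    have hlog1 : 1 ≤ Real.log n := by
      rw [Real.le_log_iff_exp_le hnpos]
      have := Real.exp_one_lt_d9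
      linarith
    have hlogL : Real.log n ≤ Real.log ((n:ℝ)^2 / c) := by
      apply Real.log_le_log hnpos
      rw [le_div_iff₀ hc]
      nlinarith
    have hp2 : Real.log n ≤ (p n)^2 * n := le_trans hlogL (hpn n)
    have hpsq : Real.sqrt (Real.log n / n) ≤ p n := by
      rw [show (p n) = Real.sqrt ((p n)^2) from (Real.sqrt_sq hp0n).symm]
      apply Real.sqrt_le_sqrt
      rw [div_le_iff₀ hnpos]
      linarith
    have hsq1n : Real.sqrt (1/(n:ℝ)) ≤ Real.sqrt (Real.log n / n) := by
      apply Real.sqrt_le_sqrt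
      gcongr
    have hkp : Real.sqrt n / 4 ≤ (k:ℝ) * p n := by
      have h1' : (n:ℝ)/4 * Real.sqrt (1/(n:ℝ)) = Real.sqrt n / 4 := by
        rw [one_div, Real.sqrt_inv]
        rw [show (n:ℝ)/4 * (Real.sqrt n)⁻¹ = ((n:ℝ) / Real.sqrt n)/4 by ring, Real.div_sqrt]
      calc Real.sqrt n / 4 = (n:ℝ)/4 * Real.sqrt (1/(n:ℝ)) := h1'.symm
        _ ≤ (k:ℝ) * Real.sqrt (1/(n:ℝ)) := by
            apply mul_le_mul_of_nonneg_right _ (Real.sqrt_nonneg _)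
            linarith
        _ ≤ (k:ℝ) * p n := by
            apply mul_le_mul_of_nonneg_left (le_trans hsq1n hpsq) (by positivity)
    have hmk : (k:ℝ) ≤ (m:ℝ) := by exact_mod_cast hkml
    have hmp : Real.sqrt n / 4 ≤ (m:ℝ) * p n :=
      le_trans hkp (mul_le_mul_of_nonneg_right hmk hp0n)
    have hkp2 : Real.log 2 ≤ (m:ℝ) * (p n)^2 / 2 := by
      have h1' : (n:ℝ) * (p n)^2 / 8 ≤ (m:ℝ)*(p n)^2/2 := by nlinarith [sq_nonneg (p n)]
      have h3' : Real.log 2 ≤ Real.log n / 8 := by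
        have h256' : (256:ℝ) ≤ n := by exact_mod_cast h256
        have hl : Real.log 256 ≤ Real.log n := Real.log_le_log (by norm_num) h256'
        have h8 : Real.log 256 = 8 * Real.log 2 := by
          rw [show (256:ℝ) = 2^8 by norm_num, Real.log_pow]
          push_cast; ring
        linarith
      nlinarith
    have hεhalf : Real.exp (-(m:ℝ) * (p n)^2 / 2) ≤ 1/2 := by
      have h' : Real.exp (-(m:ℝ)*(p n)^2/2) ≤ Real.exp (-Real.log 2) := by
        apply Real.exp_le_exp.2
        linarith
      rw [Real.exp_neg, Real.exp_log (by norm_num : (0:ℝ) < 2)] at h'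
      linarith
    have hBn : Real.exp (-(k:ℝ) * p n * (1 - Real.exp (-(m:ℝ) * (p n)^2 / 2)))
        + Real.exp (-(m:ℝ) * p n / 2) ≤ 2 * Real.exp (-Real.sqrt n / 8) := by
      have hkpn : (0:ℝ) ≤ (k:ℝ) * p n := by positivity
      have e1 : Real.exp (-(k:ℝ) * p n * (1 - Real.exp (-(m:ℝ)*(p n)^2/2)))
          ≤ Real.exp (-Real.sqrt n / 8) := by
        apply Real.exp_le_exp.2
        nlinarith [hεhalf, Real.exp_pos (-(m:ℝ)*(p n)^2/2)]
      have e2 : Real.exp (-(m:ℝ) * p n / 2) ≤ Real.exp (-Real.sqrt n / 8) := by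
        apply Real.exp_le_exp.2
        linarith
      linarith
    set bigBad : Set (Sym2 (Fin n) → Bool) :=
      ⋃ uv ∈ pairs, ERProof.badPair uv.1 uv.2 (WX uv).1 (WX uv).2 with hbigBad
    have hbadle : erMeasure n (p n) bigBad ≤ ENNReal.ofReal (Real.exp (-c / 2)) := by
      have hcard : (pairs.card : ℝ≥0∞) ≤ ((n^2 : ℕ) : ℝ≥0∞) := by
        apply Nat.cast_le.2
        calc pairs.card ≤ (Finset.univ : Finset (Fin n × Fin n)).card :=
              Finset.card_filter_le _ _
          _ = n^2 := by simp [Finset.card_univ, pow_two]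
      calc erMeasure n (p n) bigBad
          ≤ ∑ uv ∈ pairs, erMeasure n (p n)
              (ERProof.badPair uv.1 uv.2 (WX uv).1 (WX uv).2) :=
            measure_biUnion_finset_le _ _
        _ ≤ ∑ _uv ∈ pairs, ENNReal.ofReal (2 * Real.exp (-Real.sqrt n / 8)) := by
            apply Finset.sum_le_sum
            intro uv huv
            have huv' : uv.1 ≠ uv.2 := by
              rw [hpairs] at huv
              exact (Finset.mem_filter.1 huv).2
            obtain ⟨hg, hWc, hXc⟩ := hWX uv huv'
            refine le_trans (ERProof.pair_bound hp0n hp1n hg) (ENNReal.ofReal_le_ofReal ?_)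
            rw [hWc, hXc]
            exact hBn
        _ = (pairs.card : ℝ≥0∞) * ENNReal.ofReal (2 * Real.exp (-Real.sqrt n / 8)) := by
            rw [Finset.sum_const, nsmul_eq_mul]
        _ ≤ ((n^2 : ℕ) : ℝ≥0∞) * ENNReal.ofReal (2 * Real.exp (-Real.sqrt n / 8)) :=
            mul_le_mul_left hcard _
        _ = ENNReal.ofReal (((n^2:ℕ):ℝ) * (2 * Real.exp (-Real.sqrt n / 8))) := by
            rw [← ENNReal.ofReal_natCast (n^2), ← ENNReal.ofReal_mul (by positivity)]
        _ ≤ ENNReal.ofReal (Real.exp (-c / 2)) := by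
            apply ENNReal.ofReal_le_ofReal
            push_cast
            nlinarith [hFn]
    have hsub : {ω : Sym2 (Fin n) → Bool | (graphOf ω).Connected ∧
        ∀ u v : Fin n, (graphOf ω).dist u v ≤ 3}ᶜ ⊆ bigBad := by
      intro ω hω
      by_contra hno
      apply hω
      apply ERProof.graph_conclusion hn0
      intro u v huv
      have hmem : (u,v) ∈ pairs := by
        rw [hpairs]
        simp [huv]
      have hnotin : ω ∉ ERProof.badPair u v (WX (u,v)).1 (WX (u,v)).2 := by
        intro hin
        exact hno (Set.mem_iUnion₂.2 ⟨(u,v), hmem, hin⟩)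
      obtain ⟨hg, hWc, hXc⟩ := hWX (u,v) huv
      simp only [ERProof.badPair, Set.mem_setOf_eq] at hnotin
      push_neg at hnotin
      obtain ⟨w, hw, x, hx, h1, h2, h3⟩ := hnotin
      refine ⟨w, x, fun he => hg.huW (he ▸ hw), fun he => (Finset.disjoint_left.1 hg.hWX hw) (he ▸ hx),
        fun he => hg.hvX (he ▸ hx), h1, h2, h3⟩
    have hμcompl : erMeasure n (p n) ({ω : Sym2 (Fin n) → Bool | (graphOf ω).Connected ∧
        ∀ u v : Fin n, (graphOf ω).dist u v ≤ 3}ᶜ) ≤ ENNReal.ofReal (Real.exp (-c / 2)) :=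
      le_trans (measure_mono hsub) hbadle
    have hsum := measure_add_measure_compl (μ := erMeasure n (p n))
      (ERProof.measurableSet_all {ω : Sym2 (Fin n) → Bool | (graphOf ω).Connected ∧
        ∀ u v : Fin n, (graphOf ω).dist u v ≤ 3})
    have hfin1 : erMeasure n (p n) {ω : Sym2 (Fin n) → Bool | (graphOf ω).Connected ∧
        ∀ u v : Fin n, (graphOf ω).dist u v ≤ 3} ≠ ⊤ := measure_ne_top _ _
    have hfin2 : erMeasure n (p n) ({ω : Sym2 (Fin n) → Bool | (graphOf ω).Connected ∧
        ∀ u v : Fin n, (graphOf ω).dist u v ≤ 3}ᶜ) ≠ ⊤ := measure_ne_top _ _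
    have htr := congrArg ENNReal.toReal hsum
    rw [ENNReal.toReal_add hfin1 hfin2, measure_univ, ENNReal.toReal_one] at htr
    have hc2 : (erMeasure n (p n) ({ω : Sym2 (Fin n) → Bool | (graphOf ω).Connected ∧
        ∀ u v : Fin n, (graphOf ω).dist u v ≤ 3}ᶜ)).toReal ≤ Real.exp (-c / 2) := by
      calc _ ≤ (ENNReal.ofReal (Real.exp (-c / 2))).toReal :=
            ENNReal.toReal_mono ENNReal.ofReal_ne_top hμcompl
        _ = Real.exp (-c / 2) := ENNReal.toReal_ofReal (Real.exp_nonneg _)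
    linarith
  refine ⟨fun n => max 0 (1 - Real.exp (-c / 2) -
    (erMeasure n (p n) {ω | (graphOf ω).Connected ∧
      ∀ u v : Fin n, (graphOf ω).dist u v ≤ 3}).toReal), ?_, ?_⟩
  · have heq : (fun _ : ℕ => (0:ℝ)) =ᶠ[atTop] fun n => max 0 (1 - Real.exp (-c / 2) -
        (erMeasure n (p n) {ω | (graphOf ω).Connected ∧
          ∀ u v : Fin n, (graphOf ω).dist u v ≤ 3}).toReal) := by
      filter_upwards [key] with n hn
      rw [max_eq_left (by linarith)]
    exact Tendsto.congr' heq tendsto_const_nhds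
  · intro n
    have h1 := le_max_right (0:ℝ) (1 - Real.exp (-c / 2) -
      (erMeasure n (p n) {ω | (graphOf ω).Connected ∧
        ∀ u v : Fin n, (graphOf ω).dist u v ≤ 3}).toReal)
    linarith
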